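/- Let m : {0,1}³ → S¹ be defined by m(0,1,0) = m(1,0,1) = -1 and m(i,j,k) = 1 otherwise. Then m is a 2-cocycle on the covering {0,1} → pt: for all i,j,k,l ∈ {0,1}, m(j,k,l)·m(i,k,l)^{-1}·m(i,j,l)·m(i,j,k)^{-1} = 1, and it is equivariant for the swap involution: m(1-i, 1-j, 1-k) = conj(m(i,j,k)). Moreover m is not a coboundary of an equivariant 1-cochain: there is no t : {0,1}² → S¹ with t(1-i,1-j) = conj(t(i,j)) and m(i,j,k) = t(j,k)·t(i,k)^{-1}·t(i,j). -/

import Mathlib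

/-- The Čech 2-cochain on the two-element cover `{0,1} → pt` given by
`m 0 1 0 = m 1 0 1 = -1` and `m i j k = 1` otherwise. -/
noncomputable def m18 : Fin 2 → Fin 2 → Fin 2 → ℂ :=
  fun i j k => if i ≠ j ∧ j ≠ k then -1 else 1

/-- The cochain `m` with `m 0 1 0 = m 1 0 1 = -1` and `m i j k = 1`
otherwise is an equivariant Čech 2-cocycle for the swap involution
(`m (1-i) (1-j) (1-k) = conj (m i j k)`), and it is not the coboundary of any
equivariant `S¹`-valued 1-cochain `t` (where `t (1-i) (1-j) = conj (t i j)` and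
`|t i j| = 1`). -/
theorem stmt18 :
    (∀ i j k l : Fin 2,
      m18 j k l * (m18 i k l)⁻¹ * m18 i j l * (m18 i j k)⁻¹ = 1) ∧
    (∀ i j k : Fin 2, m18 (1 - i) (1 - j) (1 - k) = starRingEnd ℂ (m18 i j k)) ∧
    ¬ ∃ t : Fin 2 → Fin 2 → ℂ,
        (∀ i j, ‖t i j‖ = 1) ∧
        (∀ i j, t (1 - i) (1 - j) = starRingEnd ℂ (t i j)) ∧
        (∀ i j k, m18 i j k = t j k * (t i k)⁻¹ * t i j) := by
  refine ⟨?_, ?_, ?_⟩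
  · intro i j k l
    fin_cases i <;> fin_cases j <;> fin_cases k <;> fin_cases l <;>
      norm_num [m18]
  · intro i j k
    fin_cases i <;> fin_cases j <;> fin_cases k <;>
      norm_num [m18]
  · rintro ⟨t, habs, heq, hcob⟩
    have hne : ∀ i j, t i j ≠ 0 := by
      intro i j h
      have := habs i j
      rw [h] at this
      simp at this
    have h00 : t 0 0 = 1 := by
      have h := hcob 0 0 0
      rw [mul_inv_cancel₀ (hne 0 0), one_mul] at h
      simpa [m18] using h.symm
    have h10 : t 1 0 = starRingEnd ℂ (t 0 1) := by
      have h := heq 0 1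
      norm_num at h
      exact h
    have h := hcob 0 1 0
    rw [h00, inv_one, mul_one, h10, mul_comm ((starRingEnd ℂ) (t 0 1)) (t 0 1), Complex.mul_conj] at h
    have hn : ‖t 0 1‖ = 1 := habs 0 1
    have : Complex.normSq (t 0 1) = 1 := by
      rw [← Complex.sq_norm, hn]; norm_num
    rw [this] at h
    norm_num [m18] at h
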